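/- (Theorem 2, Scenario C, first kind of Nash equilibrium.) Assume r_A/p_A = r_D ≤ 1 and 0 ≤ q_I ≤ (1/(r_A/p_A + 1))² − 1/2. Let β* ∈ (0,1] satisfy (β*)²/(r_D + (β*)²) ≥ √(1/2 + q_I), and set α* = r_D/β*. Then α* ∈ (0,1] and (α*, β*, 1) is a Nash equilibrium of the game with objectives (J_A, J_D⁰, J_I): J_A(α*,β*,1) ≤ J_A(α,β*,1) for all α ∈ (0,1], J_D⁰(α*,β*) ≤ J_D⁰(α*,β) for all β ∈ (0,1], and J_I(α*,β*,1) ≥ J_I(α*,β*,γ) for all γ ∈ [0,1]. -/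

import Mathlib

/-- Attacker's average cost. -/
noncomputable def JA (pA qA α β γ : ℝ) : ℝ :=
  (pA * (1 - γ) ^ 2 + qA * α ^ 2 + γ ^ 2) * (β / (α + β)) ^ 2

/-- Defender's average cost. -/
noncomputable def JD (pD qD α β γ : ℝ) : ℝ :=
  (pD * (1 - γ) ^ 2 + qD * β ^ 2 + γ ^ 2) * (α / (α + β)) ^ 2

/-- Insider's average profit. -/
noncomputable def JI (pI qI α β γ : ℝ) : ℝ :=
  (pI + γ ^ 2) * (β / (α + β)) ^ 2 - (qI * γ + γ ^ 2 / 2)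

/-- Attacker's reduced cost (no cooperation with the insider): J_A⁰(α,β) = J_A(α,β,0). -/
noncomputable def JA0 (pA qA α β : ℝ) : ℝ := JA pA qA α β 0

/-- Defender's reduced cost (unaware of the insider): J_D⁰(α,β) = J_D(α,β,0). -/
noncomputable def JD0 (pD qD α β : ℝ) : ℝ := JD pD qD α β 0


/-- Theorem 2, Scenario C, first kind of Nash equilibrium. -/
theorem scenarioC_first_NE (pA pD pI qA qD qI rA rD : ℝ)
    (hpA : pA ∈ Set.Ioo (0:ℝ) 1) (hpD : pD ∈ Set.Ioo (0:ℝ) 1) (hpI : pI ∈ Set.Ioo (0:ℝ) 1)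
    (hqA : 0 < qA) (hqD : 0 < qD) (hqI : 0 ≤ qI)
    (hrA : rA = pA / qA) (hrD : rD = pD / qD)
    (h1 : rA / pA = rD) (h2 : rD ≤ 1)
    (h3 : qI ≤ (1 / (rA / pA + 1)) ^ 2 - 1 / 2)
    (βs : ℝ) (hβs : βs ∈ Set.Ioc (0:ℝ) 1)
    (hβcond : Real.sqrt (1 / 2 + qI) ≤ βs ^ 2 / (rD + βs ^ 2))
    (αs : ℝ) (hαs : αs = rD / βs) :
    αs ∈ Set.Ioc (0:ℝ) 1 ∧
    (∀ α ∈ Set.Ioc (0:ℝ) 1, JA pA qA αs βs 1 ≤ JA pA qA α βs 1) ∧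
    (∀ β ∈ Set.Ioc (0:ℝ) 1, JD0 pD qD αs βs ≤ JD0 pD qD αs β) ∧
    (∀ γ ∈ Set.Icc (0:ℝ) 1, JI pI qI αs βs γ ≤ JI pI qI αs βs 1) := by
  obtain ⟨hβ0, hβ1⟩ := hβs
  obtain ⟨hpA0, hpA1⟩ := hpA
  obtain ⟨hpD0, hpD1⟩ := hpD
  have hrD0 : 0 < rD := by rw [hrD]; positivity
  have hqA1 : qA * rD = 1 := by
    subst hrA
    rw [div_div, div_eq_iff (by positivity)] at h1
    nlinarith
  have hden : 0 < rD + βs ^ 2 := by positivity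
  have hsq : (1:ℝ)/2 + qI ≤ (βs ^ 2 / (rD + βs ^ 2)) ^ 2 := by
    nlinarith [Real.sq_sqrt (show (0:ℝ) ≤ 1/2 + qI by linarith), Real.sqrt_nonneg (1/2 + qI),
      hβcond]
  have hβrD : rD < βs ^ 2 := by
    have h12 : (1:ℝ)/2 < βs ^ 2 / (rD + βs ^ 2) := by
      nlinarith [div_nonneg (sq_nonneg βs) hden.le]
    rw [lt_div_iff₀ hden] at h12
    linarith
  have hαs0 : 0 < αs := by rw [hαs]; positivity
  have hαs1 : αs ≤ 1 := by
    rw [hαs, div_le_one hβ0]; nlinarith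
  have hβne : βs ≠ 0 := ne_of_gt hβ0
  have hmul : αs * βs = rD := by rw [hαs]; field_simp
  have hαβs : 0 < αs + βs := by linarith
  have hq2 : qA * (αs * βs) = 1 := by rw [hmul]; exact hqA1
  refine ⟨⟨hαs0, hαs1⟩, ?_, ?_, ?_⟩
  · -- attacker
    intro α hα
    obtain ⟨hα0, hα1⟩ := hα
    have hαβ : 0 < α + βs := by linarith
    unfold JA
    have e1 : ∀ a : ℝ, a + βs ≠ 0 → (pA * (1-1)^2 + qA * a ^ 2 + 1^2) * (βs / (a + βs)) ^ 2
        = (qA * a ^ 2 + 1) * βs ^ 2 / (a + βs) ^ 2 := by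
      intro a ha; field_simp; ring
    rw [e1 αs (ne_of_gt hαβs), e1 α (ne_of_gt hαβ),
      div_le_div_iff₀ (by positivity) (by positivity)]
    have id1 : (qA * α ^ 2 + 1) * βs ^ 2 * (αs + βs) ^ 2
        - (qA * αs ^ 2 + 1) * βs ^ 2 * (α + βs) ^ 2
        = qA * ((αs + βs) * βs * (α - αs) ^ 2) * βs ^ 2 := by
      linear_combination (βs ^ 2 * (α - αs) * (α + αs + 2 * βs)) * hq2
    have hnn : 0 ≤ qA * ((αs + βs) * βs * (α - αs) ^ 2) * βs ^ 2 := by positivity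
    linarith [id1, hnn]
  · -- defender
    intro β hβ
    obtain ⟨hβ0', hβ1'⟩ := hβ
    have hαβ : 0 < αs + β := by linarith
    have hpD2 : pD = qD * (αs * βs) := by rw [hmul, hrD]; field_simp
    unfold JD0 JD
    have e1 : ∀ b : ℝ, αs + b ≠ 0 → (pD * (1-0)^2 + qD * b ^ 2 + 0^2) * (αs / (αs + b)) ^ 2
        = (pD + qD * b ^ 2) * αs ^ 2 / (αs + b) ^ 2 := by
      intro b hb; field_simp; ring
    rw [e1 βs (ne_of_gt hαβs), e1 β (ne_of_gt hαβ),
      div_le_div_iff₀ (by positivity) (by positivity)]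
    have id2 : (pD + qD * β ^ 2) * αs ^ 2 * (αs + βs) ^ 2
        - (pD + qD * βs ^ 2) * αs ^ 2 * (αs + β) ^ 2
        = qD * (αs + βs) * αs * (β - βs) ^ 2 * αs ^ 2 := by
      linear_combination (αs ^ 2 * ((αs + βs) ^ 2 - (αs + β) ^ 2)) * hpD2
    have hnn : 0 ≤ qD * (αs + βs) * αs * (β - βs) ^ 2 * αs ^ 2 := by positivity
    linarith [id2, hnn]
  · -- insider
    intro γ hγ
    obtain ⟨hγ0, hγ1⟩ := hγ
    have hKs : βs / (αs + βs) = βs ^ 2 / (rD + βs ^ 2) := by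
      rw [hαs]; field_simp
    have hK : 1/2 + qI ≤ (βs / (αs + βs)) ^ 2 := by rw [hKs]; exact hsq
    unfold JI
    set K := (βs / (αs + βs)) ^ 2 with hKdef
    have h4 : (1 - γ) * (1 + γ) * qI ≤ (1 - γ) * (1 + γ) * (K - 1/2) :=
      mul_le_mul_of_nonneg_left (by linarith)
        (mul_nonneg (by linarith) (by linarith))
    have h5 : 0 ≤ γ * (1 - γ) * qI :=
      mul_nonneg (mul_nonneg hγ0 (by linarith)) hqI
    linarith [h4, h5]
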